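/- Let A be a real n×n matrix, B a real n×m matrix, Q a real symmetric positive semidefinite n×n matrix, and R a real symmetric positive definite m×m matrix. Assume the observability condition: the only vector z ∈ ℝ^n with Q A^j z = 0 for all j ∈ {0, …, n−1} is z = 0. Let N ≥ n. Then there exists a constant c > 0 such that for every initial state x₀ ∈ ℝ^n and every control sequence u(0), …, u(N−1) ∈ ℝ^m, Σ_{j=0}^{N−1} [ x(j)ᵀ Q x(j) + u(j)ᵀ R u(j) ] ≥ c ‖x₀‖², where x(0) = x₀ and x(j+1) = A x(j) + B u(j). -/

import Mathlib

open Matrix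

/-- The quadratic form `v ↦ vᵀ M v`. -/
noncomputable def quad {n : ℕ} (M : Matrix (Fin n) (Fin n) ℝ) (v : Fin n → ℝ) : ℝ :=
  v ⬝ᵥ M.mulVec v

namespace FHCost

variable {n m N : ℕ}

/-- trajectory -/
def traj (A : Matrix (Fin n) (Fin n) ℝ) (B : Matrix (Fin n) (Fin m) ℝ)
    (x0 : Fin n → ℝ) (u : ℕ → Fin m → ℝ) : ℕ → Fin n → ℝ
  | 0 => x0
  | j + 1 => A.mulVec (traj A B x0 u j) + B.mulVec (u j)

/-- pad a finite control sequence by zeros -/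
def pad (N : ℕ) {m : ℕ} (w : Fin N → Fin m → ℝ) (j : ℕ) : Fin m → ℝ :=
  if h : j < N then w ⟨j, h⟩ else 0

lemma quad_nonneg {M : Matrix (Fin n) (Fin n) ℝ} (hM : M.PosSemidef) (v : Fin n → ℝ) :
    0 ≤ quad M v := by
  simpa [quad] using hM.dotProduct_mulVec_nonneg v

lemma quad_smul (M : Matrix (Fin n) (Fin n) ℝ) (t : ℝ) (v : Fin n → ℝ) :
    quad M (t • v) = t ^ 2 * quad M v := by
  simp [quad, Matrix.mulVec_smul, dotProduct_smul, smul_dotProduct,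
    smul_eq_mul]
  ring

lemma traj_congr (A : Matrix (Fin n) (Fin n) ℝ) (B : Matrix (Fin n) (Fin m) ℝ)
    (x0 : Fin n → ℝ) (u u' : ℕ → Fin m → ℝ) (j : ℕ) (h : ∀ k < j, u k = u' k) :
    traj A B x0 u j = traj A B x0 u' j := by
  induction j with
  | zero => rfl
  | succ j ih =>
    simp only [traj, ih fun k hk => h k (Nat.lt_succ_of_lt hk),
      h j (Nat.lt_succ_self j)]

lemma traj_eq (A : Matrix (Fin n) (Fin n) ℝ) (B : Matrix (Fin n) (Fin m) ℝ)
    (x0 : Fin n → ℝ) (u : ℕ → Fin m → ℝ) (x : ℕ → Fin n → ℝ)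
    (h0 : x 0 = x0) (hrec : ∀ j : ℕ, x (j+1) = A.mulVec (x j) + B.mulVec (u j)) :
    ∀ j, x j = traj A B x0 u j := by
  intro j
  induction j with
  | zero => exact h0
  | succ j ih => rw [hrec j, ih]; rfl

lemma traj_smul (A : Matrix (Fin n) (Fin n) ℝ) (B : Matrix (Fin n) (Fin m) ℝ)
    (x0 : Fin n → ℝ) (u : ℕ → Fin m → ℝ) (t : ℝ) (j : ℕ) :
    traj A B (t • x0) (fun k => t • u k) j = t • traj A B x0 u j := by
  induction j with
  | zero => rfl
  | succ j ih => simp [traj, ih, Matrix.mulVec_smul, smul_add]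

lemma traj_zero_u (A : Matrix (Fin n) (Fin n) ℝ) (B : Matrix (Fin n) (Fin m) ℝ)
    (x0 : Fin n → ℝ) (j : ℕ) :
    traj A B x0 (fun _ => 0) j = (A ^ j).mulVec x0 := by
  induction j with
  | zero => simp [traj]
  | succ j ih =>
    simp [traj, ih, pow_succ', Matrix.mulVec_mulVec]

/-- The finite-horizon cost as a function of the initial state and the controls. -/
noncomputable def cost (A : Matrix (Fin n) (Fin n) ℝ) (B : Matrix (Fin n) (Fin m) ℝ)
    (Q : Matrix (Fin n) (Fin n) ℝ) (R : Matrix (Fin m) (Fin m) ℝ) (N : ℕ)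
    (v : (Fin n → ℝ) × (Fin N → Fin m → ℝ)) : ℝ :=
  ∑ j ∈ Finset.range N,
    (quad Q (traj A B v.1 (pad N v.2) j) + quad R (pad N v.2 j))

end FHCost

open FHCost

theorem finite_horizon_cost_lower_bound
    (n m N : ℕ) (hNn : n ≤ N)
    (A : Matrix (Fin n) (Fin n) ℝ) (B : Matrix (Fin n) (Fin m) ℝ)
    (Q : Matrix (Fin n) (Fin n) ℝ) (R : Matrix (Fin m) (Fin m) ℝ)
    (hQ : Q.PosSemidef) (hR : R.PosDef)
    (hobs : ∀ z : Fin n → ℝ, (∀ j < n, Q.mulVec ((A ^ j).mulVec z) = 0) → z = 0) :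
    ∃ c : ℝ, 0 < c ∧
      ∀ (x0 : Fin n → ℝ) (u : ℕ → Fin m → ℝ) (x : ℕ → Fin n → ℝ),
        x 0 = x0 → (∀ j : ℕ, x (j+1) = A.mulVec (x j) + B.mulVec (u j)) →
        c * (x0 ⬝ᵥ x0) ≤ ∑ j ∈ Finset.range N, (quad Q (x j) + quad R (u j)) := by
  classical
  set E := (Fin n → ℝ) × (Fin N → Fin m → ℝ)
  set F : E → ℝ := cost A B Q R N with hF
  -- cost matches the sum in the statement
  have hcost_eq : ∀ (x0 : Fin n → ℝ) (u : ℕ → Fin m → ℝ) (x : ℕ → Fin n → ℝ),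
      x 0 = x0 → (∀ j : ℕ, x (j+1) = A.mulVec (x j) + B.mulVec (u j)) →
      ∑ j ∈ Finset.range N, (quad Q (x j) + quad R (u j))
        = F (x0, fun j : Fin N => u j) := by
    intro x0 u x h0 hrec
    have hx := traj_eq A B x0 u x h0 hrec
    unfold F
    unfold cost
    apply Finset.sum_congr rfl
    intro j hj
    rw [Finset.mem_range] at hj
    have hpadj : pad N (fun j : Fin N => u j) j = u j := by
      simp [pad, hj]
    rw [hx j, hpadj]
    congr 1
    refine congrArg (quad Q) ?_
    refine traj_congr A B x0 u _ j ?_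
    intro k hk
    simp [pad, hk.trans hj]
  -- nonnegativity of terms
  have hterm_nonneg : ∀ (x : Fin n → ℝ) (w : Fin m → ℝ),
      0 ≤ quad Q x + quad R w :=
    fun x w => add_nonneg (quad_nonneg hQ x) (quad_nonneg hR.posSemidef w)
  have hF_nonneg : ∀ v : E, 0 ≤ F v := by
    intro v
    exact Finset.sum_nonneg fun j _ => hterm_nonneg _ _
  -- positivity of F on nonzero vectors
  have hF_pos : ∀ v : E, v ≠ 0 → 0 < F v := by
    intro v hv
    rcases lt_or_eq_of_le (hF_nonneg v) with h | h
    · exact h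
    exfalso
    apply hv
    -- all terms vanish
    have hzero : ∀ j ∈ Finset.range N,
        quad Q (traj A B v.1 (pad N v.2) j) + quad R (pad N v.2 j) = 0 := by
      have := (Finset.sum_eq_zero_iff_of_nonneg
        (fun j _ => hterm_nonneg _ _)).mp h.symm
      exact this
    have hu0 : ∀ j, pad N v.2 j = 0 := by
      intro j
      by_cases hj : j < N
      · have hj' := hzero j (Finset.mem_range.mpr hj)
        have h1 := quad_nonneg hQ (traj A B v.1 (pad N v.2) j)
        have h2 := quad_nonneg hR.posSemidef (pad N v.2 j)
        have hq : quad R (pad N v.2 j) = 0 := by linarith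
        by_contra hne
        have := hR.dotProduct_mulVec_pos hne
        rw [show star (pad N v.2 j) = pad N v.2 j from star_trivial _] at this
        exact absurd hq (by unfold quad; linarith)
      · simp [pad, hj]
    have hv2 : v.2 = 0 := by
      funext j i
      have := congrFun (hu0 j) i
      simpa [pad, j.isLt] using this
    have htraj : ∀ j, traj A B v.1 (pad N v.2) j = (A ^ j).mulVec v.1 := by
      intro j
      rw [traj_congr A B v.1 (pad N v.2) (fun _ => 0) j (fun k _ => hu0 k)]
      exact traj_zero_u A B v.1 j
    have hv1 : v.1 = 0 := by
      apply hobs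
      intro j hj
      have hjN : j < N := lt_of_lt_of_le hj hNn
      have hj' := hzero j (Finset.mem_range.mpr hjN)
      have h2 := quad_nonneg hR.posSemidef (pad N v.2 j)
      have h1 := quad_nonneg hQ (traj A B v.1 (pad N v.2) j)
      have hq : quad Q (traj A B v.1 (pad N v.2) j) = 0 := by linarith
      rw [htraj j] at hq
      have := (hQ.dotProduct_mulVec_zero_iff ((A ^ j).mulVec v.1)).mp ?_
      · exact this
      · rw [show star ((A ^ j).mulVec v.1) = (A ^ j).mulVec v.1 from star_trivial _]
        exact hq
    exact Prod.ext hv1 hv2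
  -- homogeneity of F
  have hF_smul : ∀ (t : ℝ) (v : E), F (t • v) = t ^ 2 * F v := by
    intro t v
    have hpad : ∀ j, pad N (t • v.2) j = t • pad N v.2 j := by
      intro j
      by_cases hj : j < N <;> simp [pad, hj]
    unfold F
    unfold cost
    rw [Finset.mul_sum]
    apply Finset.sum_congr rfl
    intro j hj
    have h1 : traj A B (t • v).1 (pad N ((t • v).2)) j
        = t • traj A B v.1 (pad N v.2) j := by
      have : (t • v).1 = t • v.1 := rfl
      rw [this]
      rw [show pad N ((t • v).2) = fun k => t • pad N v.2 k from funext hpad]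
      exact traj_smul A B v.1 (pad N v.2) t j
    rw [h1, show (t • v).2 = t • v.2 from rfl, hpad j, quad_smul, quad_smul]
    ring
  -- continuity of F
  have hcont_pad : ∀ j : ℕ, Continuous fun v : E => pad N v.2 j := by
    intro j
    by_cases hj : j < N
    · have hc : Continuous fun v : E => v.2 ⟨j, hj⟩ := (continuous_apply (⟨j, hj⟩ : Fin N)).comp continuous_snd
      simpa [pad, hj] using hc
    · simpa [pad, hj] using continuous_const
  have hcont_traj : ∀ j : ℕ, Continuous fun v : E => traj A B v.1 (pad N v.2) j := by
    intro j
    induction j with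
    | zero => exact continuous_fst
    | succ j ih =>
      exact ((continuous_const.matrix_mulVec ih).add
        (continuous_const.matrix_mulVec (hcont_pad j)))
  have hcont_F : Continuous F := by
    apply continuous_finset_sum
    intro j _
    exact ((hcont_traj j).dotProduct
        (continuous_const.matrix_mulVec (hcont_traj j))).add
      ((hcont_pad j).dotProduct
        (continuous_const.matrix_mulVec (hcont_pad j)))
  -- trivial case n = 0
  rcases Nat.eq_zero_or_pos n with hn | hn
  · refine ⟨1, one_pos, ?_⟩
    intro x0 u x h0 hrec
    subst hn
    have : x0 ⬝ᵥ x0 = 0 := by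
      simp [dotProduct]
    rw [this, mul_zero]
    exact Finset.sum_nonneg fun j _ => hterm_nonneg _ _
  -- sphere compactness
  haveI : Nonempty (Fin n) := ⟨⟨0, hn⟩⟩
  haveI : Nontrivial (Fin n → ℝ) := inferInstance
  haveI : Nontrivial E := inferInstance
  obtain ⟨w, hw⟩ := exists_norm_eq E (le_of_lt one_pos)
  have hsphere : (Metric.sphere (0 : E) 1).Nonempty := ⟨w, by simpa using hw⟩
  obtain ⟨v₀, hv₀mem, hminOn⟩ :=
    (isCompact_sphere (0 : E) 1).exists_isMinOn hsphere hcont_F.continuousOn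
  have hmin : ∀ w ∈ Metric.sphere (0 : E) 1, F v₀ ≤ F w := fun w hw => hminOn hw
  have hv₀norm : ‖v₀‖ = 1 := by simpa using hv₀mem
  have hv₀ne : v₀ ≠ 0 := by
    intro h
    rw [h, norm_zero] at hv₀norm
    exact zero_ne_one hv₀norm
  set c0 := F v₀ with hc0
  have hc0pos : 0 < c0 := hF_pos v₀ hv₀ne
  refine ⟨c0 / n, div_pos hc0pos (by exact_mod_cast hn), ?_⟩
  intro x0 u x h0 hrec
  rw [hcost_eq x0 u x h0 hrec]
  set v : E := (x0, fun j : Fin N => u j) with hv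
  by_cases hx0 : x0 = 0
  · have : x0 ⬝ᵥ x0 = 0 := by simp [hx0]
    rw [this, mul_zero]
    exact hF_nonneg v
  · have hvne : v ≠ 0 := by
      intro h
      apply hx0
      have := congrArg Prod.fst h
      exact this
    have ht : (0 : ℝ) < ‖v‖ := norm_pos_iff.mpr hvne
    set t : ℝ := ‖v‖ with htdef
    set ω : E := t⁻¹ • v with hω
    have hωnorm : ‖ω‖ = 1 := by
      rw [hω, norm_smul, norm_inv, norm_norm, ← htdef, inv_mul_cancel₀ (ne_of_gt ht)]
    have hvtω : v = t • ω := by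
      rw [hω, smul_smul, mul_inv_cancel₀ (ne_of_gt ht), one_smul]
    have hFv : F v = t ^ 2 * F ω := by rw [hvtω, hF_smul]
    have hFω : c0 ≤ F ω := hmin ω (by simpa using hωnorm)
    -- bound x0 ⬝ᵥ x0
    have hx0dot : x0 ⬝ᵥ x0 ≤ t ^ 2 * n := by
      have hx0ω : x0 = t • ω.1 := by
        have := congrArg Prod.fst hvtω
        exact this
      rw [hx0ω]
      have hd : (t • ω.1) ⬝ᵥ (t • ω.1) = t ^ 2 * (ω.1 ⬝ᵥ ω.1) := by
        simp [smul_dotProduct, dotProduct_smul, smul_eq_mul]; ring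
      rw [hd]
      have hω1 : ω.1 ⬝ᵥ ω.1 ≤ n := by
        have hb : ∀ i, ω.1 i * ω.1 i ≤ 1 := by
          intro i
          have h1 : |ω.1 i| ≤ ‖ω.1‖ := by
            simpa using norm_le_pi_norm ω.1 i
          have h2 : ‖ω.1‖ ≤ ‖ω‖ := norm_fst_le ω
          have h3 : |ω.1 i| ≤ 1 := by rw [hωnorm] at h2; linarith
          calc ω.1 i * ω.1 i = |ω.1 i| * |ω.1 i| := by rw [← abs_mul, abs_mul_self]
          _ ≤ 1 * 1 := by
              apply mul_le_mul h3 h3 (abs_nonneg _) zero_le_one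
          _ = 1 := one_mul 1
        calc ω.1 ⬝ᵥ ω.1 = ∑ i, ω.1 i * ω.1 i := rfl
        _ ≤ ∑ _i : Fin n, (1 : ℝ) := Finset.sum_le_sum fun i _ => hb i
        _ = n := by simp
      have := mul_le_mul_of_nonneg_left hω1 (sq_nonneg t)
      linarith
    have hnr : (0 : ℝ) < n := by exact_mod_cast hn
    calc c0 / n * (x0 ⬝ᵥ x0) ≤ c0 / n * (t ^ 2 * n) := by
          apply mul_le_mul_of_nonneg_left hx0dot
          exact le_of_lt (div_pos hc0pos hnr)
    _ = c0 * t ^ 2 := by field_simp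
    _ ≤ t ^ 2 * F ω := by nlinarith [sq_nonneg t]
    _ = F v := hFv.symm
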